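/- Suppose ρ < 1, the invariant measure is normalized so that ∑_{n=0}^∞ π_n = 1, and π₀ = (1−ρ)(1−ν₀)/(λE[V]). Then lim_{N→∞} P_loss(N)/S̄_π(N) = 1 − ρ. -/

import Mathlib

open MeasureTheory Filter Set Topology Asymptotics
open scoped ENNReal

noncomputable section

/-- Laplace-transform value `F*(λ − λz) = ∫ e^{−(λ−λz)t} dF(t)` (Bochner integral). -/
def qLap (μ : Measure ℝ) (lam z : ℝ) : ℝ := ∫ t, Real.exp (-(lam - lam * z) * t) ∂μ

/-- Derivative value `F*'(λ − λz) = ∫ λ t e^{−(λ−λz)t} dF(t)`. -/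
def qLapD (μ : Measure ℝ) (lam z : ℝ) : ℝ := ∫ t, lam * t * Real.exp (-(lam - lam * z) * t) ∂μ

/-- Laplace-transform value as a lower integral in `ℝ≥0∞` (possibly `+∞`). -/
def qLapE (μ : Measure ℝ) (lam z : ℝ) : ℝ≥0∞ :=
  ∫⁻ t, ENNReal.ofReal (Real.exp (-(lam - lam * z) * t)) ∂μ

/-- `R` is the leftmost (real) singular point of `z ↦ F*(λ − λz)`:
`∫ e^{λ(r−1)t} dF(t)` converges for `1 ≤ r < R` and diverges for `r > R`. -/
def qAbscissa (μ : Measure ℝ) (lam R : ℝ) : Prop :=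
  1 ≤ R ∧ (∀ r : ℝ, 1 ≤ r → r < R → Integrable (fun t => Real.exp (lam * (r - 1) * t)) μ) ∧
    (∀ r : ℝ, R < r → ¬ Integrable (fun t => Real.exp (lam * (r - 1) * t)) μ)

/-- `a_j` (resp. `ν_j`): probability that `j` Poisson(λ) arrivals occur during a
time distributed according to `μ`. -/
def qCoef (μ : Measure ℝ) (lam : ℝ) (j : ℕ) : ℝ :=
  ∫ t, (lam * t) ^ j / (Nat.factorial j : ℝ) * Real.exp (-lam * t) ∂μ

/-- `b_j = ∑_{i=1}^{j+1} (ν_i / (1 − ν₀)) a_{j+1−i}`. -/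
def qBcoef (μS μV : Measure ℝ) (lam : ℝ) (j : ℕ) : ℝ :=
  ∑ i ∈ Finset.Icc 1 (j + 1), qCoef μV lam i / (1 - qCoef μV lam 0) * qCoef μS lam (j + 1 - i)

/-- A positive measurable function is slowly varying at `+∞`. -/
def SlowlyVaryingAtTop (L : ℝ → ℝ) : Prop :=
  Measurable L ∧ (∀ x : ℝ, 0 < x → 0 < L x) ∧
    ∀ t : ℝ, 0 < t → Tendsto (fun x => L (t * x) / L x) atTop (nhds 1)

lemma ae_nonneg_of_Iio (μ : Measure ℝ) (h : μ (Set.Iio 0) = 0) : ∀ᵐ t ∂μ, 0 ≤ t := by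
  rw [MeasureTheory.ae_iff]
  convert h using 2
  ext t; simp [not_le]

lemma poisson_integrable (μ : Measure ℝ) [IsProbabilityMeasure μ] (hsupp : μ (Set.Iio 0) = 0)
    {lam : ℝ} (hlam : 0 < lam) (j : ℕ) :
    Integrable (fun t => (lam * t) ^ j / (Nat.factorial j : ℝ) * Real.exp (-lam * t)) μ := by
  refine (integrable_const (1:ℝ)).mono' (Continuous.aestronglyMeasurable (by continuity)) ?_
  filter_upwards [ae_nonneg_of_Iio μ hsupp] with t ht
  have hx : 0 ≤ lam * t := by positivity
  have h1 : (lam * t) ^ j / (Nat.factorial j : ℝ) ≤ Real.exp (lam * t) :=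
    Real.pow_div_factorial_le_exp (lam * t) hx j
  have h3 : (lam * t) ^ j / (Nat.factorial j : ℝ) * Real.exp (-lam * t) ≤ 1 := by
    calc (lam * t) ^ j / (Nat.factorial j : ℝ) * Real.exp (-lam * t)
        ≤ Real.exp (lam * t) * Real.exp (-lam * t) :=
          mul_le_mul_of_nonneg_right h1 (Real.exp_pos _).le
      _ = 1 := by rw [← Real.exp_add]; ring_nf; exact Real.exp_zero
  rw [Real.norm_eq_abs, abs_of_nonneg (by positivity)]
  exact h3

lemma qCoef_pos (μ : Measure ℝ) [IsProbabilityMeasure μ] (hsupp : μ (Set.Iio 0) = 0)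
    (hpos : 0 < μ (Set.Ioi 0)) {lam : ℝ} (hlam : 0 < lam) (j : ℕ) :
    0 < qCoef μ lam j := by
  rw [qCoef, integral_pos_iff_support_of_nonneg_ae ?_ (poisson_integrable μ hsupp hlam j)]
  · refine lt_of_lt_of_le hpos (measure_mono ?_)
    intro t ht
    have : (0:ℝ) < (lam * t) ^ j / (Nat.factorial j : ℝ) * Real.exp (-lam * t) := by
      have : 0 < lam * t := mul_pos hlam ht
      positivity
    exact fun h => this.ne' h
  · filter_upwards [ae_nonneg_of_Iio μ hsupp] with t ht
    have : 0 ≤ lam * t := by positivity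
    positivity

lemma qCoef_zero_lt_one (μ : Measure ℝ) [IsProbabilityMeasure μ] (hsupp : μ (Set.Iio 0) = 0)
    (hpos : 0 < μ (Set.Ioi 0)) {lam : ℝ} (hlam : 0 < lam) :
    qCoef μ lam 0 < 1 := by
  have hint : Integrable (fun t => Real.exp (-lam * t)) μ := by
    have := poisson_integrable μ hsupp hlam 0
    simpa using this
  have h0 : qCoef μ lam 0 = ∫ t, Real.exp (-lam * t) ∂μ := by
    rw [qCoef]; simp
  have key : 0 < ∫ t, (1 - Real.exp (-lam * t)) ∂μ := by
    have hint2 : Integrable (fun t => 1 - Real.exp (-lam * t)) μ := (integrable_const (1:ℝ)).sub hint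
    rw [integral_pos_iff_support_of_nonneg_ae ?_ hint2]
    · refine lt_of_lt_of_le hpos (measure_mono ?_)
      intro t ht
      have h1 : Real.exp (-lam * t) < 1 := by
        rw [← Real.exp_zero]
        apply Real.exp_lt_exp.2
        nlinarith [ht.out]
      intro h
      have : (1:ℝ) - Real.exp (-lam * t) = 0 := h
      linarith
    · filter_upwards [ae_nonneg_of_Iio μ hsupp] with t ht
      have : Real.exp (-lam * t) ≤ 1 := by
        rw [← Real.exp_zero]
        apply Real.exp_le_exp.2
        nlinarith
      simp only [Pi.zero_apply]
      linarith
  have heq : ∫ t, (1 - Real.exp (-lam * t)) ∂μ = 1 - ∫ t, Real.exp (-lam * t) ∂μ := by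
    rw [integral_sub (integrable_const 1) hint]
    simp
  rw [h0]
  linarith [heq ▸ key]

theorem stmt0
    (μS μV : Measure ℝ) [IsProbabilityMeasure μS] [IsProbabilityMeasure μV]
    (hSsupp : μS (Set.Iio 0) = 0) (hVsupp : μV (Set.Iio 0) = 0)
    (lam : ℝ) (hlam : 0 < lam)
    (hSint : Integrable (fun t => t) μS) (hVint : Integrable (fun t => t) μV)
    (ES EV : ℝ) (hES : ES = ∫ t, t ∂μS) (hEV : EV = ∫ t, t ∂μV)
    (hESpos : 0 < ES) (hEVpos : 0 < EV) (hVpos : 0 < μV (Set.Ioi 0))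
    (ρ : ℝ) (hρdef : ρ = lam * ES)
    (π : ℕ → ℝ) (hπnn : ∀ n, 0 ≤ π n) (hπne : π ≠ 0)
    (hinv : ∀ j : ℕ, π j = π 0 * qBcoef μS μV lam j +
      ∑ k ∈ Finset.Icc 1 (j + 1), π k * qCoef μS lam (j + 1 - k))
    (Ploss : ℕ → ℝ)
    (hPloss : ∀ N : ℕ, Ploss N =
      (EV * π 0 + (ES - lam⁻¹) * (1 - qCoef μV lam 0) * (∑ j ∈ Finset.range N, π j)) /
      (EV * π 0 + ES * (1 - qCoef μV lam 0) * (∑ j ∈ Finset.range N, π j)))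
    (hρ1 : ρ < 1) (hsum : HasSum π 1)
    (hπ0 : π 0 = (1 - ρ) * (1 - qCoef μV lam 0) / (lam * EV)) :
    Tendsto (fun N : ℕ => Ploss N / (∑' j : ℕ, π (N + j))) atTop (𝓝 (1 - ρ)) := by
  have hνlt := qCoef_zero_lt_one μV hVsupp hVpos hlam
  have hc : 0 < 1 - qCoef μV lam 0 := by linarith
  have hSpos : 0 < μS (Set.Ioi 0) := by
    rcases (zero_le : 0 ≤ μS (Set.Ioi 0)).lt_or_eq with h0 | h0
    · exact h0
    · exfalso
      have hne : μS {t : ℝ | t ≠ 0} = 0 := by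
        have hsub : {t : ℝ | t ≠ 0} ⊆ Set.Iio 0 ∪ Set.Ioi 0 := by
          intro t ht
          rcases lt_or_gt_of_ne ht with h | h
          · exact Or.inl h
          · exact Or.inr h
        refine measure_mono_null hsub ?_
        have h2 := measure_union_le (μ := μS) (Set.Iio 0) (Set.Ioi 0)
        rw [hSsupp, ← h0] at h2
        have h3 : μS (Set.Iio 0 ∪ Set.Ioi 0) = 0 :=
          le_antisymm (by simpa using h2) zero_le
        exact h3
      have hae : ∀ᵐ t ∂μS, t = (0:ℝ) := by
        rw [MeasureTheory.ae_iff]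
        exact hne
      have hES0 : ES = 0 := by
        rw [hES, integral_congr_ae (g := fun _ => (0:ℝ)) (hae.mono fun t ht => ht),
          integral_zero]
      linarith
  have haS : ∀ j, 0 < qCoef μS lam j := fun j => qCoef_pos μS hSsupp hSpos hlam j
  have haV : ∀ j, 0 < qCoef μV lam j := fun j => qCoef_pos μV hVsupp hVpos hlam j
  have hb : ∀ j, 0 < qBcoef μS μV lam j := by
    intro j
    rw [qBcoef]
    refine Finset.sum_pos (fun i _ => mul_pos (div_pos (haV i) hc) (haS _)) ⟨1, by simp⟩
  have hsumm := hsum.summable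
  have hsummN : ∀ N : ℕ, Summable (fun j => π (N + j)) := by
    intro N
    exact ((summable_nat_add_iff N).2 hsumm).congr fun j => by rw [add_comm]
  have hsplit : ∀ N : ℕ, (∑ j ∈ Finset.range N, π j) + (∑' j, π (N + j)) = 1 := by
    intro N
    have h1 := Summable.sum_add_tsum_nat_add (f := π) N hsumm
    rw [hsum.tsum_eq] at h1
    rw [show (∑' j, π (N + j)) = ∑' j, π (j + N) from tsum_congr fun j => by rw [add_comm]]
    exact h1
  have htl_nonneg : ∀ N : ℕ, 0 ≤ ∑' j, π (N + j) := fun N => tsum_nonneg fun j => hπnn _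
  have hT_nonneg : ∀ N : ℕ, 0 ≤ ∑ j ∈ Finset.range N, π j :=
    fun N => Finset.sum_nonneg fun j _ => hπnn j
  have htl_le : ∀ N : ℕ, (∑' j, π (N + j)) ≤ 1 := fun N => by
    have := hsplit N; linarith [hT_nonneg N]
  have htl_pos : ∀ N : ℕ, 0 < ∑' j, π (N + j) := by
    intro N
    rcases (htl_nonneg N).lt_or_eq with h | h
    · exact h
    exfalso
    have hz : ∀ j, π (N + j) = 0 := by
      intro j
      have hle := (hsummN N).le_tsum j (fun i _ => hπnn _)
      have h2 := hπnn (N + j)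
      rw [← h] at hle
      linarith
    have hzge : ∀ k, N ≤ k → π k = 0 := by
      intro k hk
      have := hz (k - N)
      rwa [Nat.add_sub_cancel' hk] at this
    have hall : ∀ k, π k = 0 := by
      rcases Nat.eq_zero_or_pos N with hN | hN
      · intro k
        have := hzge k (by omega)
        exact this
      · have heq := hinv N
        rw [hzge N le_rfl] at heq
        have hterm_nn : ∀ k ∈ Finset.Icc 1 (N+1), 0 ≤ π k * qCoef μS lam (N + 1 - k) :=
          fun k _ => mul_nonneg (hπnn k) (haS _).le
        have hsum_nn : 0 ≤ ∑ k ∈ Finset.Icc 1 (N+1), π k * qCoef μS lam (N+1-k) :=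
          Finset.sum_nonneg hterm_nn
        have hb_nn : 0 ≤ π 0 * qBcoef μS μV lam N := mul_nonneg (hπnn 0) (hb N).le
        have h1 : π 0 * qBcoef μS μV lam N = 0 := by linarith
        have h2 : ∑ k ∈ Finset.Icc 1 (N+1), π k * qCoef μS lam (N+1-k) = 0 := by linarith
        have hπ00 : π 0 = 0 := by
          rcases mul_eq_zero.1 h1 with h' | h'
          · exact h'
          · exact absurd h' (hb N).ne'
        have hmid := (Finset.sum_eq_zero_iff_of_nonneg hterm_nn).1 h2
        intro k
        rcases Nat.lt_or_ge k (N+2) with hk | hk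
        · rcases Nat.eq_zero_or_pos k with hk0 | hk0
          · exact hk0 ▸ hπ00
          · have hmem : k ∈ Finset.Icc 1 (N+1) := by
              simp only [Finset.mem_Icc]; omega
            rcases mul_eq_zero.1 (hmid k hmem) with h' | h'
            · exact h'
            · exact absurd h' (haS _).ne'
        · exact hzge k (by omega)
    rw [funext hall] at hsum
    exact one_ne_zero (hsum.unique hasSum_zero)
  have hlam' : lam ≠ 0 := hlam.ne'
  have hρpos : 0 < ρ := hρdef ▸ mul_pos hlam hESpos
  have hEVπ0 : EV * π 0 = (1 - ρ) * (1 - qCoef μV lam 0) / lam := by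
    rw [hπ0]
    field_simp
  have hES' : ES = ρ / lam := by rw [hρdef]; field_simp
  have key : ∀ N : ℕ, Ploss N / (∑' j, π (N + j)) =
      (1 - ρ) / ((1 - ρ) + ρ * (1 - ∑' j, π (N + j))) := by
    intro N
    have hTt : (∑ j ∈ Finset.range N, π j) = 1 - ∑' j, π (N + j) := by
      linarith [hsplit N]
    have hcl : (1 - qCoef μV lam 0) / lam ≠ 0 := by positivity
    have hnum : EV * π 0 + (ES - lam⁻¹) * (1 - qCoef μV lam 0) * (∑ j ∈ Finset.range N, π j)
        = ((1 - qCoef μV lam 0) / lam) * ((1 - ρ) * (∑' j, π (N + j))) := by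
      rw [hEVπ0, hES', hTt]
      field_simp
      ring
    have hden : EV * π 0 + ES * (1 - qCoef μV lam 0) * (∑ j ∈ Finset.range N, π j)
        = ((1 - qCoef μV lam 0) / lam) * ((1 - ρ) + ρ * (1 - ∑' j, π (N + j))) := by
      rw [hEVπ0, hES', hTt]
      field_simp
    have hDpos : 0 < (1 - ρ) + ρ * (1 - ∑' j, π (N + j)) := by
      nlinarith [htl_le N, htl_pos N]
    have ht : (∑' j, π (N + j)) ≠ 0 := (htl_pos N).ne'
    rw [hPloss N, hnum, hden, mul_div_mul_left _ _ hcl]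
    field_simp
  have hTlim : Tendsto (fun N : ℕ => ∑ j ∈ Finset.range N, π j) atTop (𝓝 1) :=
    hsum.tendsto_sum_nat
  have htllim : Tendsto (fun N : ℕ => ∑' j, π (N + j)) atTop (𝓝 0) := by
    have hfun : (fun N : ℕ => ∑' j, π (N + j)) = fun N => 1 - ∑ j ∈ Finset.range N, π j :=
      funext fun N => by linarith [hsplit N]
    rw [hfun]
    simpa using hTlim.const_sub 1
  have hfinal : Tendsto (fun N : ℕ => (1 - ρ) / ((1 - ρ) + ρ * (1 - ∑' j, π (N + j)))) atTop
      (𝓝 ((1 - ρ) / ((1 - ρ) + ρ * (1 - 0)))) := by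
    apply Tendsto.div tendsto_const_nhds
    · exact tendsto_const_nhds.add (tendsto_const_nhds.mul (tendsto_const_nhds.sub htllim))
    · norm_num
  have hval : (1 - ρ) / ((1 - ρ) + ρ * (1 - (0:ℝ))) = 1 - ρ := by
    rw [show (1 - ρ) + ρ * (1 - (0:ℝ)) = 1 by ring, div_one]
  rw [hval] at hfinal
  exact Tendsto.congr (fun N => (key N).symm) hfinal
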